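/- Let V be finite dimensional, W and W' unital associative algebras, and A, B, C, D ∈ End(V ⊗ V). Let T ∈ End(V) ⊗ W satisfy A T₁ B T₂ = T₂ C T₁ D, and let L, R ∈ End(V) ⊗ W' satisfy the four comodule relations A L₁ L₂ = L₂ L₁ A, R₁ B L₂ = L₂ B R₁, L₁ C R₂ = R₂ C L₁, and D R₁ R₂ = R₂ R₁ D (all elements of End(V ⊗ V) ⊗ W', with W and W' commuting inside W ⊗ W'). Then T' := L T R ∈ End(V) ⊗ (W ⊗ W') satisfies A T'₁ B T'₂ = T'₂ C T'₁ D. -/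
import Mathlib


open Matrix Kronecker TensorProduct


section helpers
variable {S S' : Type*} [Ring S] [Ring S'] {m : ℕ}

lemma kron_one_mul (X Y : Matrix (Fin m) (Fin m) S) :
    ((X * Y) ⊗ₖ (1 : Matrix (Fin m) (Fin m) S))
      = (X ⊗ₖ (1 : Matrix (Fin m) (Fin m) S)) * (Y ⊗ₖ (1 : Matrix (Fin m) (Fin m) S)) := by
  ext ⟨i, j⟩ ⟨k, l⟩
  simp [Matrix.mul_apply, Matrix.one_apply, Fintype.sum_prod_type, mul_ite, ite_mul,
    Finset.sum_ite_eq, Finset.sum_ite_eq']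

lemma one_mul_kron (X Y : Matrix (Fin m) (Fin m) S) :
    ((1 : Matrix (Fin m) (Fin m) S) ⊗ₖ (X * Y))
      = ((1 : Matrix (Fin m) (Fin m) S) ⊗ₖ X) * ((1 : Matrix (Fin m) (Fin m) S) ⊗ₖ Y) := by
  ext ⟨i, j⟩ ⟨k, l⟩
  simp [Matrix.mul_apply, Matrix.one_apply, Fintype.sum_prod_type, mul_ite, ite_mul,
    Finset.sum_ite_eq, Finset.sum_ite_eq']

lemma kron_commute (X Y : Matrix (Fin m) (Fin m) S)
    (h : ∀ i j k l, Commute (X i j) (Y k l)) :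
    Commute (X ⊗ₖ (1 : Matrix (Fin m) (Fin m) S)) ((1 : Matrix (Fin m) (Fin m) S) ⊗ₖ Y) := by
  show _ = _
  ext ⟨i, j⟩ ⟨k, l⟩
  simp only [Matrix.mul_apply, kroneckerMap_apply, Matrix.one_apply, Fintype.sum_prod_type,
    mul_ite, ite_mul, mul_zero, zero_mul, mul_one, one_mul, Finset.sum_ite_eq,
    Finset.sum_ite_eq', Finset.mem_univ, if_true]
  rw [Finset.sum_comm]
  simp only [Finset.sum_ite_eq, Finset.sum_ite_eq', Finset.mem_univ, if_true]
  exact (h i k j l).eq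

lemma map_kron (f : S →+* S') (X Y : Matrix (Fin m) (Fin m) S) :
    (X ⊗ₖ Y).map f = X.map f ⊗ₖ Y.map f := by
  ext ⟨i, j⟩ ⟨k, l⟩
  simp

end helpers

section monoidchain
variable {M : Type*} [Monoid M]

lemma chain_lemma (a b c d t1 t2 l1 l2 r1 r2 : M)
    (hT : a * t1 * b * t2 = t2 * c * t1 * d)
    (hL : a * l1 * l2 = l2 * l1 * a)
    (hRBL : r1 * b * l2 = l2 * b * r1)
    (hLCR : l1 * c * r2 = r2 * c * l1)
    (hD : d * r1 * r2 = r2 * r1 * d)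
    (c12 : Commute t1 l2) (c21 : Commute t2 l1)
    (cr12 : Commute t1 r2) (cr21 : Commute t2 r1) :
    a * (l1 * t1 * r1) * b * (l2 * t2 * r2)
      = (l2 * t2 * r2) * c * (l1 * t1 * r1) * d := by
  have H1 : ∀ x, r1 * (b * (l2 * x)) = l2 * (b * (r1 * x)) := fun x => by
    have := congrArg (· * x) hRBL; simpa [mul_assoc] using this
  have H2 : ∀ x, a * (l1 * (l2 * x)) = l2 * (l1 * (a * x)) := fun x => by
    have := congrArg (· * x) hL; simpa [mul_assoc] using this
  have H3 : ∀ x, l1 * (c * (r2 * x)) = r2 * (c * (l1 * x)) := fun x => by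
    have := congrArg (· * x) hLCR; simpa [mul_assoc] using this
  have H4 : ∀ x, d * (r1 * (r2 * x)) = r2 * (r1 * (d * x)) := fun x => by
    have := congrArg (· * x) hD; simpa [mul_assoc] using this
  have HT : ∀ x, a * (t1 * (b * (t2 * x))) = t2 * (c * (t1 * (d * x))) := fun x => by
    have := congrArg (· * x) hT; simpa [mul_assoc] using this
  have C12 : ∀ x, t1 * (l2 * x) = l2 * (t1 * x) := fun x => by
    rw [← mul_assoc, c12.eq, mul_assoc]
  have C21 : ∀ x, l1 * (t2 * x) = t2 * (l1 * x) := fun x => by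
    rw [← mul_assoc, ← c21.eq, mul_assoc]
  have CR12 : ∀ x, t1 * (r2 * x) = r2 * (t1 * x) := fun x => by
    rw [← mul_assoc, cr12.eq, mul_assoc]
  have CR21 : ∀ x, r1 * (t2 * x) = t2 * (r1 * x) := fun x => by
    rw [← mul_assoc, ← cr21.eq, mul_assoc]
  have key : a * (l1 * (t1 * (r1 * (b * (l2 * (t2 * r2))))))
      = l2 * (t2 * (r2 * (c * (l1 * (t1 * (r1 * d)))))) := by
    rw [H1, C12, CR21]
    -- now: a * (l1 * (l2 * (t1 * (b * (t2 * (r1 * r2)))))) ?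
    rw [H2, HT, show d * (r1 * r2) = r2 * (r1 * d) by
      have := hD; simpa [mul_assoc] using this]
    rw [C21, CR12, H3]
  calc a * (l1 * t1 * r1) * b * (l2 * t2 * r2)
      = a * (l1 * (t1 * (r1 * (b * (l2 * (t2 * r2)))))) := by
        simp [mul_assoc]
    _ = l2 * (t2 * (r2 * (c * (l1 * (t1 * (r1 * d)))))) := key
    _ = (l2 * t2 * r2) * c * (l1 * t1 * r1) * d := by
        simp [mul_assoc]
end monoidchain

variable {n : ℕ} {W W' : Type*} [Ring W] [Ring W'] [Algebra ℂ W] [Algebra ℂ W']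

/-- Entrywise embedding of a scalar matrix into matrices over an algebra `S`. -/
noncomputable def embS (S : Type*) [Ring S] [Algebra ℂ S] {m : Type*}
    (M : Matrix m m ℂ) : Matrix m m S :=
  M.map (algebraMap ℂ S)

/-- Comodule structure for non-dynamical quadratic exchange algebras: if
`T ∈ End(V) ⊗ W` satisfies `A T₁ B T₂ = T₂ C T₁ D` and `L, R ∈ End(V) ⊗ W'`
satisfy `A L₁ L₂ = L₂ L₁ A`, `R₁ B L₂ = L₂ B R₁`, `L₁ C R₂ = R₂ C L₁`,
`D R₁ R₂ = R₂ R₁ D`, then `T' = L T R ∈ End(V) ⊗ (W ⊗ W')` satisfies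
`A T'₁ B T'₂ = T'₂ C T'₁ D`. -/
theorem comodule_quadratic_exchange
    (A B C D : Matrix (Fin n × Fin n) (Fin n × Fin n) ℂ)
    (T : Matrix (Fin n) (Fin n) W) (L R : Matrix (Fin n) (Fin n) W')
    (hT : embS W A * (T ⊗ₖ (1 : Matrix (Fin n) (Fin n) W)) * embS W B
        * ((1 : Matrix (Fin n) (Fin n) W) ⊗ₖ T)
      = ((1 : Matrix (Fin n) (Fin n) W) ⊗ₖ T) * embS W C
        * (T ⊗ₖ (1 : Matrix (Fin n) (Fin n) W)) * embS W D)
    (hL : embS W' A * (L ⊗ₖ (1 : Matrix (Fin n) (Fin n) W')) * ((1 : Matrix (Fin n) (Fin n) W') ⊗ₖ L)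
      = ((1 : Matrix (Fin n) (Fin n) W') ⊗ₖ L) * (L ⊗ₖ (1 : Matrix (Fin n) (Fin n) W')) * embS W' A)
    (hRBL : (R ⊗ₖ (1 : Matrix (Fin n) (Fin n) W')) * embS W' B * ((1 : Matrix (Fin n) (Fin n) W') ⊗ₖ L)
      = ((1 : Matrix (Fin n) (Fin n) W') ⊗ₖ L) * embS W' B * (R ⊗ₖ (1 : Matrix (Fin n) (Fin n) W')))
    (hLCR : (L ⊗ₖ (1 : Matrix (Fin n) (Fin n) W')) * embS W' C * ((1 : Matrix (Fin n) (Fin n) W') ⊗ₖ R)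
      = ((1 : Matrix (Fin n) (Fin n) W') ⊗ₖ R) * embS W' C * (L ⊗ₖ (1 : Matrix (Fin n) (Fin n) W')))
    (hD : embS W' D * (R ⊗ₖ (1 : Matrix (Fin n) (Fin n) W')) * ((1 : Matrix (Fin n) (Fin n) W') ⊗ₖ R)
      = ((1 : Matrix (Fin n) (Fin n) W') ⊗ₖ R) * (R ⊗ₖ (1 : Matrix (Fin n) (Fin n) W')) * embS W' D) :
    (embS (W ⊗[ℂ] W') A
        * ((L.map Algebra.TensorProduct.includeRight * T.map (Algebra.TensorProduct.includeLeft (S := ℂ))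
            * R.map Algebra.TensorProduct.includeRight) ⊗ₖ (1 : Matrix (Fin n) (Fin n) (W ⊗[ℂ] W')))
        * embS (W ⊗[ℂ] W') B
        * ((1 : Matrix (Fin n) (Fin n) (W ⊗[ℂ] W'))
            ⊗ₖ (L.map Algebra.TensorProduct.includeRight * T.map (Algebra.TensorProduct.includeLeft (S := ℂ))
            * R.map Algebra.TensorProduct.includeRight)))
      = ((1 : Matrix (Fin n) (Fin n) (W ⊗[ℂ] W'))
            ⊗ₖ (L.map Algebra.TensorProduct.includeRight * T.map (Algebra.TensorProduct.includeLeft (S := ℂ))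
            * R.map Algebra.TensorProduct.includeRight))
        * embS (W ⊗[ℂ] W') C
        * ((L.map Algebra.TensorProduct.includeRight * T.map (Algebra.TensorProduct.includeLeft (S := ℂ))
            * R.map Algebra.TensorProduct.includeRight) ⊗ₖ (1 : Matrix (Fin n) (Fin n) (W ⊗[ℂ] W')))
        * embS (W ⊗[ℂ] W') D := by
  set f := (Algebra.TensorProduct.includeLeft : W →ₐ[ℂ] W ⊗[ℂ] W') with hf
  set g := (Algebra.TensorProduct.includeRight : W' →ₐ[ℂ] W ⊗[ℂ] W') with hg
  have embf : ∀ (M : Matrix (Fin n × Fin n) (Fin n × Fin n) ℂ),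
      (embS W M).map f.toRingHom = embS (W ⊗[ℂ] W') M := by
    intro M; ext i j; simp [embS, Matrix.map_apply]
  have embg : ∀ (M : Matrix (Fin n × Fin n) (Fin n × Fin n) ℂ),
      (embS W' M).map g.toRingHom = embS (W ⊗[ℂ] W') M := by
    intro M; ext i j; simp [embS, Matrix.map_apply]
  have hT' := congrArg (f.toRingHom.mapMatrix) hT
  have hL' := congrArg (g.toRingHom.mapMatrix) hL
  have hRBL' := congrArg (g.toRingHom.mapMatrix) hRBL
  have hLCR' := congrArg (g.toRingHom.mapMatrix) hLCR
  have hD' := congrArg (g.toRingHom.mapMatrix) hD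
  simp only [RingHom.mapMatrix_apply, Matrix.map_mul, map_kron, Matrix.map_one f.toRingHom
    (map_zero _) (map_one _), Matrix.map_one g.toRingHom (map_zero _) (map_one _),
    embf, embg] at hT' hL' hRBL' hLCR' hD'
  have comm : ∀ (x : W) (y : W'), Commute (f x) (g y) := by
    intro x y
    simp [hf, hg, Commute, SemiconjBy, Algebra.TensorProduct.tmul_mul_tmul]
  have commT : ∀ i j k l, Commute ((T.map f.toRingHom) i j) ((L.map g.toRingHom) k l) :=
    fun i j k l => comm _ _
  have commTR : ∀ i j k l, Commute ((T.map f.toRingHom) i j) ((R.map g.toRingHom) k l) :=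
    fun i j k l => comm _ _
  have goal := chain_lemma (M := Matrix (Fin n × Fin n) (Fin n × Fin n) (W ⊗[ℂ] W'))
    (embS (W ⊗[ℂ] W') A) (embS (W ⊗[ℂ] W') B) (embS (W ⊗[ℂ] W') C) (embS (W ⊗[ℂ] W') D)
    ((T.map f.toRingHom) ⊗ₖ 1) (1 ⊗ₖ (T.map f.toRingHom))
    ((L.map g.toRingHom) ⊗ₖ 1) (1 ⊗ₖ (L.map g.toRingHom))
    ((R.map g.toRingHom) ⊗ₖ 1) (1 ⊗ₖ (R.map g.toRingHom))
    hT' hL' hRBL' hLCR' hD'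
    (kron_commute _ _ commT)
    ((kron_commute _ _ (fun i j k l => (commT k l i j).symm)).symm)
    (kron_commute _ _ commTR)
    ((kron_commute _ _ (fun i j k l => (commTR k l i j).symm)).symm)
  have hmap : ∀ (X : Matrix (Fin n) (Fin n) W'), X.map g = X.map g.toRingHom := fun _ => rfl
  have hmapf : T.map (Algebra.TensorProduct.includeLeft (S := ℂ)) = T.map f.toRingHom := rfl
  rw [hmap L, hmap R, hmapf]
  simpa only [kron_one_mul, one_mul_kron] using goal
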